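/- arXiv:2602.13906 — 2 statements merged into one kernel-verified Lean document; each statement's English description precedes it below -/
import Mathlib

section
/- Let J ∈ ℝ^{d×d} be a Hurwitz matrix (all eigenvalues have strictly negative real part) and let V be the unique symmetric positive definite solution of the Lyapunov equation JᵀV + VJ + I = 0. Set ι = 1/(4‖V‖). Then for all ε₁ ∈ [0, min(1, 2ι/‖J‖²_V)] and ε₂ ∈ [0, min(1, ι/3)], the V-weighted operator norm satisfies ‖I + ε₁ J + ε₁ε₂ I‖²_V ≤ 1 − ι ε₁. -/
set_option autoImplicit false
open Matrix

/-- The `V`-weighted norm `‖x‖_V = √(xᵀ V x)`. -/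
noncomputable def wnorm {d : ℕ} (V : Matrix (Fin d) (Fin d) ℝ) (x : Fin d → ℝ) : ℝ :=
  Real.sqrt (x ⬝ᵥ V.mulVec x)

/-- The `V`-weighted operator norm `‖A‖_V = sup_{‖x‖_V = 1} ‖Ax‖_V`. -/
noncomputable def wopNorm {d : ℕ} (V A : Matrix (Fin d) (Fin d) ℝ) : ℝ :=
  sSup {r | ∃ x : Fin d → ℝ, wnorm V x = 1 ∧ r = wnorm V (A.mulVec x)}

section aux

variable {d : ℕ}

private lemma norm_equiv_sq (x : Fin d → ℝ) :
    ‖(WithLp.equiv 2 (Fin d → ℝ)).symm x‖ ^ 2 = x ⬝ᵥ x := by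
  rw [← real_inner_self_eq_norm_sq]
  simpa using EuclideanSpace.inner_toLp_toLp (𝕜 := ℝ) x x

private lemma clm_apply_equiv (A : Matrix (Fin d) (Fin d) ℝ) (x : Fin d → ℝ) :
    Matrix.toEuclideanCLM (𝕜 := ℝ) A ((WithLp.equiv 2 (Fin d → ℝ)).symm x) =
      (WithLp.equiv 2 (Fin d → ℝ)).symm (A.mulVec x) := by
  simp [Matrix.toLin'_apply]

/-- `⟨x, Ax⟩ ≤ ‖A‖ ⟨x,x⟩`. -/
private lemma dot_mulVec_le (A : Matrix (Fin d) (Fin d) ℝ) (x : Fin d → ℝ) :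
    x ⬝ᵥ A.mulVec x ≤ ‖Matrix.toEuclideanCLM (𝕜 := ℝ) A‖ * (x ⬝ᵥ x) := by
  set e := (WithLp.equiv 2 (Fin d → ℝ)).symm with he
  have h1 : x ⬝ᵥ A.mulVec x = inner ℝ (e x) (Matrix.toEuclideanCLM (𝕜 := ℝ) A (e x)) := by
    rw [clm_apply_equiv]
    simpa [he, dotProduct_comm] using (EuclideanSpace.inner_toLp_toLp (𝕜 := ℝ) x (A.mulVec x)).symm
  rw [h1]
  calc inner ℝ (e x) (Matrix.toEuclideanCLM (𝕜 := ℝ) A (e x))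
      ≤ ‖e x‖ * ‖Matrix.toEuclideanCLM (𝕜 := ℝ) A (e x)‖ := real_inner_le_norm _ _
    _ ≤ ‖e x‖ * (‖Matrix.toEuclideanCLM (𝕜 := ℝ) A‖ * ‖e x‖) := by
        gcongr
        exact (Matrix.toEuclideanCLM (𝕜 := ℝ) A).le_opNorm _
    _ = ‖Matrix.toEuclideanCLM (𝕜 := ℝ) A‖ * (‖e x‖ ^ 2) := by ring
    _ = ‖Matrix.toEuclideanCLM (𝕜 := ℝ) A‖ * (x ⬝ᵥ x) := by rw [he, norm_equiv_sq]

/-- `⟨Ax, Ax⟩ ≤ ‖A‖² ⟨x,x⟩`. -/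
private lemma mulVec_dot_mulVec_le (A : Matrix (Fin d) (Fin d) ℝ) (x : Fin d → ℝ) :
    A.mulVec x ⬝ᵥ A.mulVec x ≤ ‖Matrix.toEuclideanCLM (𝕜 := ℝ) A‖ ^ 2 * (x ⬝ᵥ x) := by
  set e := (WithLp.equiv 2 (Fin d → ℝ)).symm with he
  have h1 : A.mulVec x ⬝ᵥ A.mulVec x = ‖e (A.mulVec x)‖ ^ 2 := (norm_equiv_sq _).symm
  have h2 : ‖e (A.mulVec x)‖ ≤ ‖Matrix.toEuclideanCLM (𝕜 := ℝ) A‖ * ‖e x‖ := by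
    rw [he, ← clm_apply_equiv]
    exact (Matrix.toEuclideanCLM (𝕜 := ℝ) A).le_opNorm _
  rw [h1]
  calc ‖e (A.mulVec x)‖ ^ 2 ≤ (‖Matrix.toEuclideanCLM (𝕜 := ℝ) A‖ * ‖e x‖) ^ 2 := by
        exact pow_le_pow_left₀ (norm_nonneg _) h2 2
    _ = ‖Matrix.toEuclideanCLM (𝕜 := ℝ) A‖ ^ 2 * ‖e x‖ ^ 2 := by ring
    _ = ‖Matrix.toEuclideanCLM (𝕜 := ℝ) A‖ ^ 2 * (x ⬝ᵥ x) := by rw [he, norm_equiv_sq]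

private lemma dot_nonneg {V : Matrix (Fin d) (Fin d) ℝ} (hV : V.PosSemidef) (x : Fin d → ℝ) :
    0 ≤ x ⬝ᵥ V.mulVec x := by
  have := hV.dotProduct_mulVec_nonneg x
  simpa using this

open scoped MatrixOrder

/-- Lower bound: `⟨x,x⟩ ≤ C ⟨x, Vx⟩` for some `C ≥ 0`. -/
private lemma exists_lower {V : Matrix (Fin d) (Fin d) ℝ} (hV : V.PosDef) :
    ∃ C : ℝ, 0 ≤ C ∧ ∀ x : Fin d → ℝ, x ⬝ᵥ x ≤ C * (x ⬝ᵥ V.mulVec x) := by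
  set S := CFC.sqrt V with hSdef
  have hS : S.PosSemidef := (CFC.sqrt_nonneg V).posSemidef
  have hSS : S * S = V := CFC.sqrt_mul_sqrt_self V hV.posSemidef.nonneg
  have hdet : IsUnit S.det := by
    have hdV : 0 < V.det := hV.det_pos
    rw [← hSS, det_mul] at hdV
    have : S.det ≠ 0 := by intro h; rw [h] at hdV; simpa using hdV
    exact isUnit_iff_ne_zero.mpr this
  have hinv : S⁻¹ * S = 1 := nonsing_inv_mul S hdet
  refine ⟨‖Matrix.toEuclideanCLM (𝕜 := ℝ) S⁻¹‖ ^ 2, by positivity, fun x => ?_⟩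
  have hx : x = S⁻¹.mulVec (S.mulVec x) := by
    rw [mulVec_mulVec, hinv, one_mulVec]
  have h1 : x ⬝ᵥ x ≤ ‖Matrix.toEuclideanCLM (𝕜 := ℝ) S⁻¹‖ ^ 2 * (S.mulVec x ⬝ᵥ S.mulVec x) := by
    conv_lhs => rw [hx]
    exact mulVec_dot_mulVec_le _ _
  have h2 : S.mulVec x ⬝ᵥ S.mulVec x = x ⬝ᵥ V.mulVec x := by
    have hsymm : Sᵀ = S := by
      have := hS.1
      rw [Matrix.IsHermitian] at this
      simpa [Matrix.conjTranspose_eq_transpose_of_trivial] using this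
    calc S.mulVec x ⬝ᵥ S.mulVec x = (x ᵥ* Sᵀ) ⬝ᵥ S.mulVec x := by rw [vecMul_transpose]
      _ = x ⬝ᵥ Sᵀ.mulVec (S.mulVec x) := (dotProduct_mulVec _ _ _).symm
      _ = x ⬝ᵥ V.mulVec x := by rw [mulVec_mulVec, hsymm, hSS]
  rw [h2] at h1
  exact h1

private lemma wnorm_nonneg (V : Matrix (Fin d) (Fin d) ℝ) (x : Fin d → ℝ) : 0 ≤ wnorm V x :=
  Real.sqrt_nonneg _

private lemma wnorm_sq {V : Matrix (Fin d) (Fin d) ℝ} (hV : V.PosSemidef) (x : Fin d → ℝ) :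
    wnorm V x ^ 2 = x ⬝ᵥ V.mulVec x := Real.sq_sqrt (dot_nonneg hV x)

private lemma wnorm_smul (V : Matrix (Fin d) (Fin d) ℝ) (c : ℝ) (x : Fin d → ℝ) :
    wnorm V (c • x) = |c| * wnorm V x := by
  unfold wnorm
  have h : (c • x) ⬝ᵥ V.mulVec (c • x) = c ^ 2 * (x ⬝ᵥ V.mulVec x) := by
    simp [mulVec_smul, smul_dotProduct, dotProduct_smul, smul_eq_mul]
    ring
  rw [h, Real.sqrt_mul (by positivity), Real.sqrt_sq_eq_abs]

/-- There exists a `V`-unit vector when `0 < d`. -/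
private lemma exists_unit {V : Matrix (Fin d) (Fin d) ℝ} (hV : V.PosDef) (hd : 0 < d) :
    ∃ x : Fin d → ℝ, wnorm V x = 1 := by
  haveI : NeZero d := ⟨hd.ne'⟩
  set x₀ : Fin d → ℝ := Pi.single ⟨0, hd⟩ 1 with hx₀
  have hne : x₀ ≠ 0 := by
    intro h
    have := congrFun h ⟨0, hd⟩
    simp [hx₀] at this
  have hq : 0 < x₀ ⬝ᵥ V.mulVec x₀ := by
    have := hV.dotProduct_mulVec_pos hne
    simpa using this
  have ht : 0 < wnorm V x₀ := Real.sqrt_pos.mpr hq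
  refine ⟨(wnorm V x₀)⁻¹ • x₀, ?_⟩
  rw [wnorm_smul, abs_of_pos (by positivity), inv_mul_cancel₀ ht.ne']

/-- The defining set of `wopNorm` is bounded above for posdef `V`. -/
private lemma bddAbove_wop {V : Matrix (Fin d) (Fin d) ℝ} (hV : V.PosDef)
    (A : Matrix (Fin d) (Fin d) ℝ) :
    BddAbove {r | ∃ x : Fin d → ℝ, wnorm V x = 1 ∧ r = wnorm V (A.mulVec x)} := by
  obtain ⟨C, hC0, hC⟩ := exists_lower hV
  refine ⟨Real.sqrt (‖Matrix.toEuclideanCLM (𝕜 := ℝ) V‖ *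
    (‖Matrix.toEuclideanCLM (𝕜 := ℝ) A‖ ^ 2 * C)), ?_⟩
  rintro r ⟨x, hx, rfl⟩
  have hx1 : x ⬝ᵥ V.mulVec x = 1 := by
    have := wnorm_sq hV.posSemidef x
    rw [hx] at this; simpa using this.symm
  have hxx : x ⬝ᵥ x ≤ C := by
    have := hC x
    rw [hx1, mul_one] at this
    exact this
  apply Real.sqrt_le_sqrt
  calc A.mulVec x ⬝ᵥ V.mulVec (A.mulVec x)
      ≤ ‖Matrix.toEuclideanCLM (𝕜 := ℝ) V‖ * (A.mulVec x ⬝ᵥ A.mulVec x) := dot_mulVec_le _ _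
    _ ≤ ‖Matrix.toEuclideanCLM (𝕜 := ℝ) V‖ * (‖Matrix.toEuclideanCLM (𝕜 := ℝ) A‖ ^ 2 * (x ⬝ᵥ x)) := by
        gcongr
        exact mulVec_dot_mulVec_le _ _
    _ ≤ ‖Matrix.toEuclideanCLM (𝕜 := ℝ) V‖ * (‖Matrix.toEuclideanCLM (𝕜 := ℝ) A‖ ^ 2 * C) := by
        gcongr

private lemma le_wopNorm {V : Matrix (Fin d) (Fin d) ℝ} (hV : V.PosDef)
    (A : Matrix (Fin d) (Fin d) ℝ) {x : Fin d → ℝ} (hx : wnorm V x = 1) :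
    wnorm V (A.mulVec x) ≤ wopNorm V A :=
  le_csSup (bddAbove_wop hV A) ⟨x, hx, rfl⟩

private lemma wopNorm_nonneg (V A : Matrix (Fin d) (Fin d) ℝ) : 0 ≤ wopNorm V A :=
  Real.sSup_nonneg fun r ⟨x, _, hr⟩ => hr ▸ wnorm_nonneg V _

end aux

theorem contraction_hurwitz_weighted_norm {d : ℕ} (J V : Matrix (Fin d) (Fin d) ℝ)
    (hJ : ∀ μ ∈ spectrum ℂ (J.map (algebraMap ℝ ℂ)), μ.re < 0)
    (hV : V.PosDef) (hVsymm : Vᵀ = V)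
    (hLyap : Jᵀ * V + V * J + 1 = 0)
    (ι : ℝ) (hι : ι = 1 / (4 * ‖Matrix.toEuclideanCLM (𝕜 := ℝ) V‖))
    (ε₁ ε₂ : ℝ)
    (hε₁ : ε₁ ∈ Set.Icc 0 (min 1 (2 * ι / (wopNorm V J) ^ 2)))
    (hε₂ : ε₂ ∈ Set.Icc 0 (min 1 (ι / 3))) :
    (wopNorm V (1 + ε₁ • J + (ε₁ * ε₂) • (1 : Matrix (Fin d) (Fin d) ℝ))) ^ 2 ≤ 1 - ι * ε₁ := by
  obtain ⟨hε₁0, hε₁m⟩ := hε₁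
  obtain ⟨hε₂0, hε₂m⟩ := hε₂
  have hε₁1 : ε₁ ≤ 1 := hε₁m.trans (min_le_left _ _)
  have hε₁w : ε₁ ≤ 2 * ι / (wopNorm V J) ^ 2 := hε₁m.trans (min_le_right _ _)
  have hε₂1 : ε₂ ≤ 1 := hε₂m.trans (min_le_left _ _)
  have hε₂ι : ε₂ ≤ ι / 3 := hε₂m.trans (min_le_right _ _)
  have hι0 : 0 ≤ ι := by rw [hι]; positivity
  set A : Matrix (Fin d) (Fin d) ℝ := 1 + ε₁ • J + (ε₁ * ε₂) • 1 with hA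
  set w : ℝ := wopNorm V J with hw
  have hw0 : 0 ≤ w := wopNorm_nonneg V J
  -- the Lyapunov identity in matrix form
  have hLyap' : Jᵀ * V + V * J = -1 := by
    have := hLyap
    linear_combination (norm := abel) this
  -- key per-vector identity
  have key : ∀ x : Fin d → ℝ,
      A.mulVec x ⬝ᵥ V.mulVec (A.mulVec x) =
        (1 + ε₁ * ε₂) ^ 2 * (x ⬝ᵥ V.mulVec x) - (1 + ε₁ * ε₂) * ε₁ * (x ⬝ᵥ x)
          + ε₁ ^ 2 * (J.mulVec x ⬝ᵥ V.mulVec (J.mulVec x)) := by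
    intro x
    have hAx : A.mulVec x = (1 + ε₁ * ε₂) • x + ε₁ • J.mulVec x := by
      rw [hA]
      simp [add_mulVec, smul_mulVec, one_mulVec, add_smul, one_smul]
      abel
    have cross : x ⬝ᵥ V.mulVec (J.mulVec x) + J.mulVec x ⬝ᵥ V.mulVec x = -(x ⬝ᵥ x) := by
      have h1 : x ⬝ᵥ V.mulVec (J.mulVec x) = x ⬝ᵥ (V * J).mulVec x := by
        rw [mulVec_mulVec]
      have h2 : J.mulVec x ⬝ᵥ V.mulVec x = x ⬝ᵥ (Jᵀ * V).mulVec x := by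
        rw [← vecMul_transpose, dotProduct_mulVec, vecMul_vecMul, ← dotProduct_mulVec]
      rw [h1, h2, ← dotProduct_add, ← add_mulVec]
      rw [add_comm (V * J) (Jᵀ * V), hLyap']
      simp [neg_mulVec, one_mulVec]
    rw [hAx]
    simp only [dotProduct_add, add_dotProduct, mulVec_add, mulVec_smul,
      dotProduct_smul, smul_dotProduct, smul_eq_mul]
    linear_combination ((1 + ε₁ * ε₂) * ε₁) * cross
  -- elementwise bound
  have perx : ∀ x : Fin d → ℝ, wnorm V x = 1 →
      A.mulVec x ⬝ᵥ V.mulVec (A.mulVec x) ≤ 1 - ι * ε₁ := by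
    intro x hx
    have hx1 : x ⬝ᵥ V.mulVec x = 1 := by
      have := wnorm_sq hV.posSemidef x
      rw [hx] at this; simpa using this.symm
    set q : ℝ := J.mulVec x ⬝ᵥ V.mulVec (J.mulVec x) with hqdef
    have hq0 : 0 ≤ q := dot_nonneg hV.posSemidef _
    have hqw : q ≤ w ^ 2 := by
      have h1 : wnorm V (J.mulVec x) ≤ w := le_wopNorm hV J hx
      have h2 : wnorm V (J.mulVec x) ^ 2 = q := wnorm_sq hV.posSemidef _
      calc q = wnorm V (J.mulVec x) ^ 2 := h2.symm
        _ ≤ w ^ 2 := pow_le_pow_left₀ (wnorm_nonneg _ _) h1 2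
    have hε₁q : ε₁ * q ≤ 2 * ι := by
      rcases eq_or_lt_of_le hw0 with h | h
      · have : q = 0 := le_antisymm (by rw [← h] at hqw; simpa using hqw) hq0
        rw [this, mul_zero]; positivity
      · have hww : 0 < w ^ 2 := by positivity
        have hmul := mul_le_mul_of_nonneg_right hε₁w (le_of_lt hww)
        have h2' : 2 * ι / w ^ 2 * w ^ 2 = 2 * ι := by field_simp
        rw [h2'] at hmul
        calc ε₁ * q ≤ ε₁ * w ^ 2 := by gcongr
          _ ≤ 2 * ι := hmul
    set n : ℝ := x ⬝ᵥ x with hndef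
    have hn0 : 0 ≤ n := by
      have : n = x ⬝ᵥ (1 : Matrix (Fin d) (Fin d) ℝ).mulVec x := by rw [one_mulVec]
      rw [this]
      exact dot_nonneg (Matrix.PosSemidef.one) x
    have hVn : 1 ≤ ‖Matrix.toEuclideanCLM (𝕜 := ℝ) V‖ * n := by
      have := dot_mulVec_le V x
      rw [hx1] at this
      exact this
    have hVpos : 0 < ‖Matrix.toEuclideanCLM (𝕜 := ℝ) V‖ := by
      by_contra h
      push_neg at h
      nlinarith
    have hιpos : 0 < ι := by
      rw [hι]
      exact div_pos one_pos (by linarith)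
    have hιV : ι * (4 * ‖Matrix.toEuclideanCLM (𝕜 := ℝ) V‖) = 1 := by
      rw [hι]
      exact one_div_mul_cancel (ne_of_gt (by linarith))
    have hn4ι : 4 * ι ≤ n := by
      nlinarith
    rw [key x, hx1]
    nlinarith [mul_nonneg hε₁0 hε₂0, mul_nonneg (mul_nonneg hε₁0 hε₂0) (mul_nonneg hε₁0 hε₂0),
      mul_nonneg hε₁0 hn0, mul_nonneg (mul_nonneg hε₁0 hε₂0) (mul_nonneg hε₁0 hn0),
      mul_nonneg hε₁0 hq0, mul_le_of_le_one_left (mul_nonneg hε₁0 hε₂0) hε₁1,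
      mul_nonneg hε₁0 (mul_nonneg hε₁0 hε₂0)]
  rcases Nat.eq_zero_or_pos d with hd | hd
  · -- d = 0 : the set is empty and ι = 0
    subst hd
    have hempty : {r | ∃ x : Fin 0 → ℝ, wnorm V x = 1 ∧ r = wnorm V (A.mulVec x)} = ∅ := by
      ext r
      simp only [Set.mem_setOf_eq, Set.mem_empty_iff_false, iff_false, not_exists]
      intro x ⟨hx, _⟩
      have : x ⬝ᵥ V.mulVec x = 0 := by
        simp [dotProduct]
      rw [wnorm, this, Real.sqrt_zero] at hx
      exact one_ne_zero hx.symm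
    have hV0 : ‖Matrix.toEuclideanCLM (𝕜 := ℝ) V‖ = 0 := by
      apply le_antisymm _ (norm_nonneg _)
      apply ContinuousLinearMap.opNorm_le_bound _ le_rfl
      intro x
      simp [EuclideanSpace.norm_eq]
    have hι0' : ι = 0 := by rw [hι, hV0]; norm_num
    rw [wopNorm, hempty, Real.sSup_empty, hι0']
    norm_num
  · -- d > 0 : nonempty set
    obtain ⟨x₀, hx₀⟩ := exists_unit hV hd
    have h0 : 0 ≤ 1 - ι * ε₁ := le_trans (dot_nonneg hV.posSemidef _) (perx x₀ hx₀)
    have hle : wopNorm V A ≤ Real.sqrt (1 - ι * ε₁) := by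
      apply Real.sSup_le _ (Real.sqrt_nonneg _)
      rintro r ⟨x, hx, rfl⟩
      exact Real.sqrt_le_sqrt (perx x hx)
    calc wopNorm V A ^ 2 ≤ Real.sqrt (1 - ι * ε₁) ^ 2 :=
          pow_le_pow_left₀ (wopNorm_nonneg V A) hle 2
      _ = 1 - ι * ε₁ := Real.sq_sqrt h0
end

section
/- Let u_k be nonnegative reals satisfying u_{k+1} ≤ (1 − μ₁ α_k) u_k + μ₃ α_k^{1+ρ₂}, where α_k = α/(k+K), K ≥ 1, and μ₁α = ρ₂ > 0. Then u_k ≤ u₀ (K/(k+K))^{μ₁α} + 2^{1+ρ₂} α^{1+ρ₂} μ₃ log(k+K) / (k+K)^{ρ₂} for all k ≥ 1. -/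
set_option autoImplicit false

private lemma crit_aux1 (t ρ : ℝ) (ht : 1 ≤ t) (hρ : 0 < ρ) :
    (1 - ρ / t) * (t + 1) ^ ρ ≤ t ^ ρ := by
  have ht0 : (0:ℝ) < t := by linarith
  rcases le_or_gt (1 - ρ / t) 0 with h | h
  · have h1 : (0:ℝ) ≤ (t + 1) ^ ρ := Real.rpow_nonneg (by linarith) ρ
    have h2 : (0:ℝ) ≤ t ^ ρ := Real.rpow_nonneg ht0.le ρ
    nlinarith
  · have hlog : Real.log (1 + 1 / t) ≤ 1 / t := by
      have := Real.log_le_sub_one_of_pos (show (0:ℝ) < 1 + 1 / t by positivity)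
      linarith
    have h1 : (1 + 1 / t) ^ ρ ≤ Real.exp (ρ / t) := by
      rw [Real.rpow_def_of_pos (by positivity)]
      apply Real.exp_le_exp.mpr
      have := mul_le_mul_of_nonneg_right hlog hρ.le
      calc Real.log (1 + 1 / t) * ρ ≤ 1 / t * ρ := this
        _ = ρ / t := by ring
    have h2 : (t + 1) ^ ρ = t ^ ρ * (1 + 1 / t) ^ ρ := by
      rw [← Real.mul_rpow ht0.le (by positivity)]
      congr 1
      field_simp
    have h3 : (1 - ρ / t) * Real.exp (ρ / t) ≤ 1 := by
      have hb := Real.add_one_le_exp (-(ρ / t))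
      have hE : (0:ℝ) < Real.exp (ρ / t) := Real.exp_pos _
      have hb' : (1 - ρ / t) ≤ Real.exp (-(ρ / t)) := by linarith
      calc (1 - ρ / t) * Real.exp (ρ / t)
          ≤ Real.exp (-(ρ / t)) * Real.exp (ρ / t) :=
            mul_le_mul_of_nonneg_right hb' hE.le
        _ = 1 := by rw [← Real.exp_add]; simp
    have htρ : (0:ℝ) ≤ t ^ ρ := Real.rpow_nonneg ht0.le ρ
    calc (1 - ρ / t) * (t + 1) ^ ρ
        = (1 - ρ / t) * (1 + 1 / t) ^ ρ * t ^ ρ := by rw [h2]; ring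
      _ ≤ (1 - ρ / t) * Real.exp (ρ / t) * t ^ ρ := by
          exact mul_le_mul_of_nonneg_right (mul_le_mul_of_nonneg_left h1 h.le) htρ
      _ ≤ 1 * t ^ ρ := mul_le_mul_of_nonneg_right h3 htρ
      _ = t ^ ρ := one_mul _

private lemma crit_step (ρ A B L w s : ℝ) (hρ : 0 < ρ) (hs1 : 1 ≤ s)
    (hA : 0 ≤ A) (hB : 0 ≤ B) (hL : 0 ≤ L)
    (ih : L ≤ A / s ^ ρ + (2 ^ (1 + ρ) * B) * Real.log s / s ^ ρ)
    (hw : w ≤ (1 - ρ / s) * L + B / s ^ (1 + ρ)) :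
    w ≤ A / (s + 1) ^ ρ + (2 ^ (1 + ρ) * B) * Real.log (s + 1) / (s + 1) ^ ρ := by
  have hs0 : (0:ℝ) < s := by linarith
  have hs10 : (0:ℝ) < s + 1 := by linarith
  have hsρ : (0:ℝ) < s ^ ρ := Real.rpow_pos_of_pos hs0 _
  have hs1ρ : (0:ℝ) < (s + 1) ^ ρ := Real.rpow_pos_of_pos hs10 _
  have hsp : (0:ℝ) < s ^ (1 + ρ) := Real.rpow_pos_of_pos hs0 _
  have hs1p0 : (0:ℝ) < (s + 1) ^ (1 + ρ) := Real.rpow_pos_of_pos hs10 _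
  have h2ρ : (0:ℝ) < (2:ℝ) ^ (1 + ρ) := Real.rpow_pos_of_pos two_pos _
  set C : ℝ := 2 ^ (1 + ρ) * B with hC
  have hCnn : 0 ≤ C := by positivity
  have hlogs : 0 ≤ Real.log s := Real.log_nonneg hs1
  have F1 : (1 - ρ / s) / s ^ ρ ≤ 1 / (s + 1) ^ ρ := by
    rw [div_le_div_iff₀ hsρ hs1ρ]
    have := crit_aux1 s ρ hs1 hρ
    linarith
  have hlogF : 1 / (s + 1) ≤ Real.log (s + 1) - Real.log s := by
    have h := Real.log_le_sub_one_of_pos (show (0:ℝ) < s / (s + 1) by positivity)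
    rw [Real.log_div hs0.ne' hs10.ne'] at h
    have he : s / (s + 1) - 1 = -(1 / (s + 1)) := by field_simp; ring
    rw [he] at h
    linarith
  have F3 : (s + 1) ^ (1 + ρ) ≤ 2 ^ (1 + ρ) * s ^ (1 + ρ) := by
    rw [← Real.mul_rpow (by norm_num) hs0.le]
    apply Real.rpow_le_rpow (by linarith) (by linarith) (by linarith)
  have hs1p : (s + 1) ^ (1 + ρ) = (s + 1) * (s + 1) ^ ρ := by
    rw [Real.rpow_add hs10, Real.rpow_one]
  have step1 : B / s ^ (1 + ρ) ≤ C / (s + 1) ^ (1 + ρ) := by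
    rw [div_le_div_iff₀ hsp hs1p0, hC]
    calc B * (s + 1) ^ (1 + ρ) ≤ B * (2 ^ (1 + ρ) * s ^ (1 + ρ)) :=
          mul_le_mul_of_nonneg_left F3 hB
      _ = 2 ^ (1 + ρ) * B * s ^ (1 + ρ) := by ring
  rcases le_or_gt (ρ / s) 1 with hc | hc
  · -- nonnegative coefficient
    have hcoef : 0 ≤ 1 - ρ / s := by linarith
    have E3 : B / s ^ (1 + ρ) ≤ C * (Real.log (s + 1) - Real.log s) / (s + 1) ^ ρ := by
      refine step1.trans ?_
      rw [hs1p, div_le_div_iff₀ (by positivity) hs1ρ]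
      have hc1 : C ≤ C * (Real.log (s + 1) - Real.log s) * (s + 1) := by
        have h1 : C * (1 / (s + 1)) * (s + 1) ≤ C * (Real.log (s + 1) - Real.log s) * (s + 1) :=
          mul_le_mul_of_nonneg_right (mul_le_mul_of_nonneg_left hlogF hCnn) hs10.le
        have h2 : C * (1 / (s + 1)) * (s + 1) = C := by field_simp
        linarith
      calc C * (s + 1) ^ ρ ≤ C * (Real.log (s + 1) - Real.log s) * (s + 1) * (s + 1) ^ ρ :=
            mul_le_mul_of_nonneg_right hc1 hs1ρ.le
        _ = C * (Real.log (s + 1) - Real.log s) * ((s + 1) * (s + 1) ^ ρ) := by ring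
    have E1 : (1 - ρ / s) * (A / s ^ ρ) ≤ A / (s + 1) ^ ρ := by
      have h := mul_le_mul_of_nonneg_left F1 hA
      calc (1 - ρ / s) * (A / s ^ ρ) = A * ((1 - ρ / s) / s ^ ρ) := by ring
        _ ≤ A * (1 / (s + 1) ^ ρ) := h
        _ = A / (s + 1) ^ ρ := by ring
    have E2 : (1 - ρ / s) * (C * Real.log s / s ^ ρ) ≤ C * Real.log s / (s + 1) ^ ρ := by
      have hcl : 0 ≤ C * Real.log s := mul_nonneg hCnn hlogs
      have h := mul_le_mul_of_nonneg_left F1 hcl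
      calc (1 - ρ / s) * (C * Real.log s / s ^ ρ) = C * Real.log s * ((1 - ρ / s) / s ^ ρ) := by ring
        _ ≤ C * Real.log s * (1 / (s + 1) ^ ρ) := h
        _ = C * Real.log s / (s + 1) ^ ρ := by ring
    have step : (1 - ρ / s) * L ≤ (1 - ρ / s) * (A / s ^ ρ + C * Real.log s / s ^ ρ) :=
      mul_le_mul_of_nonneg_left ih hcoef
    have final : C * Real.log s / (s + 1) ^ ρ + C * (Real.log (s + 1) - Real.log s) / (s + 1) ^ ρ
        = C * Real.log (s + 1) / (s + 1) ^ ρ := by ring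
    have expand : (1 - ρ / s) * (A / s ^ ρ + C * Real.log s / s ^ ρ)
        = (1 - ρ / s) * (A / s ^ ρ) + (1 - ρ / s) * (C * Real.log s / s ^ ρ) := by ring
    linarith
  · -- negative coefficient
    have hneg : (1 - ρ / s) * L ≤ 0 := mul_nonpos_of_nonpos_of_nonneg (by linarith) hL
    have hub : w ≤ B / s ^ (1 + ρ) := by linarith
    have hlog2 : Real.log 2 ≤ Real.log (s + 1) :=
      Real.log_le_log (by norm_num) (by linarith)
    have hl2 : (1:ℝ) / 2 ≤ Real.log (s + 1) := by
      have := Real.log_two_gt_d9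
      linarith
    have hll : (1:ℝ) ≤ Real.log (s + 1) * (s + 1) := by nlinarith
    have step2 : C / (s + 1) ^ (1 + ρ) ≤ C * Real.log (s + 1) / (s + 1) ^ ρ := by
      rw [hs1p, div_le_div_iff₀ (by positivity) hs1ρ]
      calc C * (s + 1) ^ ρ = C * 1 * (s + 1) ^ ρ := by ring
        _ ≤ C * (Real.log (s + 1) * (s + 1)) * (s + 1) ^ ρ :=
            mul_le_mul_of_nonneg_right (mul_le_mul_of_nonneg_left hll hCnn) hs1ρ.le
        _ = C * Real.log (s + 1) * ((s + 1) * (s + 1) ^ ρ) := by ring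
    have hposA : 0 ≤ A / (s + 1) ^ ρ := by positivity
    have := (step1.trans step2)
    linarith

theorem recursion_one_over_k_critical (u : ℕ → ℝ) (μ₁ μ₃ ρ₂ α K : ℝ)
    (hu : ∀ k, 0 ≤ u k) (hμ₁ : 0 ≤ μ₁) (hμ₃ : 0 ≤ μ₃)
    (hα : 0 < α) (hK : 1 ≤ K) (hcrit : μ₁ * α = ρ₂) (hρ₂ : 0 < ρ₂)
    (hrec : ∀ k : ℕ, u (k + 1) ≤ (1 - μ₁ * (α / ((k : ℝ) + K))) * u k +
      μ₃ * (α / ((k : ℝ) + K)) ^ (1 + ρ₂)) :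
    ∀ k : ℕ, 1 ≤ k → u k ≤ u 0 * (K / ((k : ℝ) + K)) ^ (μ₁ * α) +
      2 ^ (1 + ρ₂) * α ^ (1 + ρ₂) * μ₃ * Real.log ((k : ℝ) + K) / ((k : ℝ) + K) ^ ρ₂ := by
  have hK0 : (0:ℝ) < K := by linarith
  have hαρ : (0:ℝ) ≤ α ^ (1 + ρ₂) := Real.rpow_nonneg hα.le _
  have main : ∀ k : ℕ, u k ≤ u 0 * K ^ ρ₂ / ((k : ℝ) + K) ^ ρ₂ +
      (2 ^ (1 + ρ₂) * (μ₃ * α ^ (1 + ρ₂))) * Real.log ((k : ℝ) + K) / ((k : ℝ) + K) ^ ρ₂ := by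
    intro k
    induction k with
    | zero =>
      have h0 : ((0:ℕ):ℝ) + K = K := by simp
      rw [h0]
      have hKρ : (0:ℝ) < K ^ ρ₂ := Real.rpow_pos_of_pos hK0 _
      have h1 : u 0 * K ^ ρ₂ / K ^ ρ₂ = u 0 := by field_simp
      have h2ρ : (0:ℝ) < (2:ℝ) ^ (1 + ρ₂) := Real.rpow_pos_of_pos two_pos _
      have h2 : 0 ≤ (2 ^ (1 + ρ₂) * (μ₃ * α ^ (1 + ρ₂))) * Real.log K / K ^ ρ₂ := by
        have := Real.log_nonneg hK
        positivity
      linarith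
    | succ k ih =>
      have hs1 : (1:ℝ) ≤ (k:ℝ) + K := by
        have : (0:ℝ) ≤ (k:ℝ) := Nat.cast_nonneg k
        linarith
      have hs0 : (0:ℝ) < (k:ℝ) + K := by linarith
      have hsucc : ((k + 1 : ℕ) : ℝ) + K = ((k:ℝ) + K) + 1 := by push_cast; ring
      rw [hsucc]
      have hμα : μ₁ * (α / ((k:ℝ) + K)) = ρ₂ / ((k:ℝ) + K) := by rw [← hcrit]; ring
      have hpow : (α / ((k:ℝ) + K)) ^ (1 + ρ₂) = α ^ (1 + ρ₂) / ((k:ℝ) + K) ^ (1 + ρ₂) :=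
        Real.div_rpow hα.le hs0.le _
      have hrk := hrec k
      rw [hμα, hpow] at hrk
      have hrk' : u (k + 1) ≤ (1 - ρ₂ / ((k:ℝ) + K)) * u k +
          (μ₃ * α ^ (1 + ρ₂)) / ((k:ℝ) + K) ^ (1 + ρ₂) := by
        calc u (k + 1) ≤ (1 - ρ₂ / ((k:ℝ) + K)) * u k
              + μ₃ * (α ^ (1 + ρ₂) / ((k:ℝ) + K) ^ (1 + ρ₂)) := hrk
          _ = (1 - ρ₂ / ((k:ℝ) + K)) * u k
              + (μ₃ * α ^ (1 + ρ₂)) / ((k:ℝ) + K) ^ (1 + ρ₂) := by ring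
      exact crit_step ρ₂ (u 0 * K ^ ρ₂) (μ₃ * α ^ (1 + ρ₂)) (u k) (u (k + 1)) ((k:ℝ) + K)
        hρ₂ hs1 (mul_nonneg (hu 0) (Real.rpow_pos_of_pos hK0 _).le) (by positivity)
        (hu k) ih hrk'
  intro k hk
  rw [hcrit]
  have hdiv : (K / ((k : ℝ) + K)) ^ ρ₂ = K ^ ρ₂ / ((k : ℝ) + K) ^ ρ₂ := by
    have hk0 : (0:ℝ) ≤ (k:ℝ) + K := by
      have : (0:ℝ) ≤ (k:ℝ) := Nat.cast_nonneg k
      linarith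
    exact Real.div_rpow hK0.le hk0 _
  rw [hdiv, ← mul_div_assoc]
  have hre : 2 ^ (1 + ρ₂) * α ^ (1 + ρ₂) * μ₃ = 2 ^ (1 + ρ₂) * (μ₃ * α ^ (1 + ρ₂)) := by ring
  rw [hre]
  exact main k
end
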